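/- Consider the RMSProp recursion v_{1,i} = β₁ v + (1 − β₁) G_{1,i}² and v_{t+1,i} = (1 − 1/(t+1)) v_{t,i} + (1/(t+1)) G_{t+1,i}² for t ≥ 1, with v > 0 and β₁ ∈ (0,1). Define S_{t,i} = v + Σ_{k=1}^{t} G_{k,i}². Then for all t ≥ 1, t·v_{t,i} ≥ r₁·S_{t,i}, where r₁ = min(β₁, 1 − β₁). -/

import Mathlib

/-- For the RMSProp recursion with `v_1 = β₁ v + (1−β₁)G_1²` and
`v_{t+1} = (1 − 1/(t+1)) v_t + (1/(t+1)) G_{t+1}²`, for all `t ≥ 1` one has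
`t·v_t ≥ r₁·S_t` where `S_t = v + Σ_{k=1}^t G_k²` and `r₁ = min(β₁, 1−β₁)`. -/
theorem stmt14 (v G : ℕ → ℝ) (vinit β₁ : ℝ) (hvinit : 0 < vinit)
    (hβ : β₁ ∈ Set.Ioo (0 : ℝ) 1) (hG : ∀ t, 0 ≤ G t)
    (h1 : v 1 = β₁ * vinit + (1 - β₁) * G 1 ^ 2)
    (hrec : ∀ t : ℕ, 1 ≤ t →
      v (t + 1) = (1 - 1 / ((t : ℝ) + 1)) * v t + (1 / ((t : ℝ) + 1)) * G (t + 1) ^ 2) :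
    ∀ t : ℕ, 1 ≤ t →
      min β₁ (1 - β₁) * (vinit + ∑ k ∈ Finset.Icc 1 t, G k ^ 2) ≤ (t : ℝ) * v t := by
  obtain ⟨hβ0, hβ1⟩ := hβ
  have hr1 : min β₁ (1 - β₁) ≤ 1 := le_trans (min_le_left _ _) hβ1.le
  intro t ht
  induction t with
  | zero => omega
  | succ n ih =>
    rcases Nat.eq_or_lt_of_le ht with h | h
    · -- n + 1 = 1, i.e. n = 0
      have hn : n = 0 := by omega
      subst hn
      simp only [Finset.Icc_self, Finset.sum_singleton, h1]
      push_cast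
      rcases min_cases β₁ (1 - β₁) with ⟨hm, hle⟩ | ⟨hm, hle⟩ <;> rw [hm] <;> nlinarith [sq_nonneg (G 1)]
    · have hn : 1 ≤ n := by omega
      have key : ((n : ℝ) + 1) * v (n + 1) = (n : ℝ) * v n + G (n + 1) ^ 2 := by
        rw [hrec n hn]
        have hne : (n : ℝ) + 1 ≠ 0 := by positivity
        field_simp
        ring
      have ih' := ih hn
      have hsum : ∑ k ∈ Finset.Icc 1 (n + 1), G k ^ 2
          = (∑ k ∈ Finset.Icc 1 n, G k ^ 2) + G (n + 1) ^ 2 := by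
        rw [Finset.sum_Icc_succ_top (by omega)]
      push_cast
      rw [key, hsum]
      nlinarith [sq_nonneg (G (n + 1))]
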